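/- arXiv:1906.03409 — 2 statements merged into one kernel-verified Lean document; each statement's English description precedes it below -/
import Mathlib

section
/- Let μ be a ℂ^{n×n}-valued local Borel measure on [0,∞) with det[ I − μ({0}) ] ≠ 0, and let ρ be its resolvent, i.e., the unique local measure with ρ − μ ∗ ρ = μ = ρ − ρ ∗ μ. Suppose there exists γ > 0 such that the exponentially weighted measure μ^γ, defined by μ^γ(E) = ∫ χ_E(s) e^{−γs} μ(ds), has finite total variation on [0,∞). Then there exists α ≥ γ such that ρ^α, defined analogously by ρ^α(E) = ∫ χ_E(s) e^{−αs} ρ(ds), has finite total variation on [0,∞). -/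
open MeasureTheory Filter Topology

/-- A `ℂ^{n×n}`-valued local Borel measure on `[0,∞)`: countably additive on bounded
Borel sets with finite total variation on compacts.  It is represented by a positive
base measure together with a locally integrable matrix-valued density. -/
structure LocalMatrixMeasure (n : ℕ) where
  base : MeasureTheory.Measure ℝ
  dens : ℝ → Fin n → Fin n → ℂ
  meas : ∀ i j, Measurable fun t => dens t i j
  locInt : ∀ T : ℝ, ∀ i j, MeasureTheory.IntegrableOn (fun t => dens t i j) (Set.Icc 0 T) base
  supp : base (Set.Iio 0) = 0

namespace LocalMatrixMeasure

/-- The value `μ(E)` of the matrix measure on a Borel set `E`. -/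
noncomputable def val {n : ℕ} (μ : LocalMatrixMeasure n) (E : Set ℝ) :
    Matrix (Fin n) (Fin n) ℂ :=
  Matrix.of fun i j => ∫ t in E, μ.dens t i j ∂μ.base

/-- The half-line convolution of two matrix measures:
`(μ ∗ ν)(E) = ∫_{[0,∞)} μ(ds) ν((E−s) ∩ [0,∞))`. -/
noncomputable def conv {n : ℕ} (μ ν : LocalMatrixMeasure n) (E : Set ℝ) :
    Matrix (Fin n) (Fin n) ℂ :=
  Matrix.of fun i j => ∑ k, ∫ s in Set.Ici (0:ℝ),
    μ.dens s i k * ν.val ((· + s) ⁻¹' E ∩ Set.Ici 0) k j ∂μ.base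

/-- `ρ` is the resolvent of `μ`: `ρ − μ ∗ ρ = μ = ρ − ρ ∗ μ` (as an identity of local
measures, i.e. on every bounded Borel set). -/
def IsResolvent {n : ℕ} (μ ρ : LocalMatrixMeasure n) : Prop :=
  ∀ E : Set ℝ, MeasurableSet E → Bornology.IsBounded E →
    ρ.val E - μ.conv ρ E = μ.val E ∧ ρ.val E - ρ.conv μ E = μ.val E

end LocalMatrixMeasure

open Set
open scoped NNReal ENNReal

namespace LocalMatrixMeasure

variable {n : ℕ}

lemma ae_nonneg (σ : LocalMatrixMeasure n) : ∀ᵐ t ∂σ.base, (0:ℝ) ≤ t := by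
  rw [ae_iff]
  convert σ.supp using 2
  ext t; simp [not_le]

lemma restrict_Ici (σ : LocalMatrixMeasure n) : σ.base.restrict (Ici 0) = σ.base := by
  refine Measure.restrict_eq_self_of_ae_mem ?_
  exact σ.ae_nonneg

/-- integrability of `w · dens` for `w` bounded and vanishing right of `T`. -/
lemma integrable_mul_dens (σ : LocalMatrixMeasure n) {T M : ℝ} {w : ℝ → ℂ}
    (hw : Measurable w) (hM : ∀ t, ‖w t‖ ≤ M) (h0 : ∀ t, T < t → w t = 0)
    (k j : Fin n) : Integrable (fun t => w t * σ.dens t k j) σ.base := by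
  refine Integrable.mono'
      (g := (Icc (0:ℝ) T).indicator (fun t => M * ‖σ.dens t k j‖)) ?_ ?_ ?_
  · exact (integrable_indicator_iff measurableSet_Icc).2 ((σ.locInt T k j).norm.const_mul M)
  · exact (hw.mul (σ.meas k j)).aestronglyMeasurable
  · filter_upwards [σ.ae_nonneg] with t ht
    by_cases hmem : t ∈ Icc (0:ℝ) T
    · rw [indicator_of_mem hmem, norm_mul]
      exact mul_le_mul_of_nonneg_right (hM t) (norm_nonneg _)
    · have hTt : T < t := by
        rcases lt_or_ge T t with h | h
        · exact h
        · exact absurd ⟨ht, h⟩ hmem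
      rw [indicator_of_notMem hmem, h0 t hTt, zero_mul, norm_zero]

/-- Strong measurability in the parameter `s` of the inner convolution integral. -/
lemma aesm_Y (ρ : LocalMatrixMeasure n) {T : ℝ} {w : ℝ → ℂ}
    (hw : Measurable w) (h0 : ∀ t, t ∉ Icc (0:ℝ) T → w t = 0) (k j : Fin n)
    (ν0 : Measure ℝ) :
    AEStronglyMeasurable (fun s => ∫ t in Ici (0:ℝ), w (t + s) * ρ.dens t k j ∂ρ.base)
      (ν0.restrict (Ici 0)) := by
  set g : ℝ → ℝ≥0 := fun t => ‖ρ.dens t k j‖₊ with hg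
  have hgmeas : Measurable g := (ρ.meas k j).nnnorm
  set κ : Measure ℝ := (ρ.base.restrict (Icc 0 T)).withDensity (fun t => (g t : ENNReal))
    with hκ
  have hfin : IsFiniteMeasure κ := by
    constructor
    rw [hκ, withDensity_apply _ MeasurableSet.univ, Measure.restrict_univ]
    have h2 := (ρ.locInt T k j).2
    simpa [HasFiniteIntegral, hg, enorm_eq_nnnorm] using h2
  set u : ℝ → ℂ := fun t => (‖ρ.dens t k j‖ : ℂ)⁻¹ * ρ.dens t k j with hu
  have humeas : Measurable u :=
    ((Complex.measurable_ofReal.comp (ρ.meas k j).norm).inv).mul (ρ.meas k j)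
  have hsmul : ∀ t, g t • u t = ρ.dens t k j := by
    intro t
    by_cases h : ρ.dens t k j = 0
    · simp [hu, hg, h]
    · have hn : (‖ρ.dens t k j‖ : ℂ) ≠ 0 := by
        simpa using norm_ne_zero_iff.mpr h
      simp only [hu, hg, NNReal.smul_def, coe_nnnorm]
      rw [Complex.real_smul, ← mul_assoc, mul_inv_cancel₀ hn, one_mul]
  set Z : ℝ → ℂ := fun s => ∫ t, w (t + s) * u t ∂κ with hZ
  have hZmeas : StronglyMeasurable Z := by
    apply StronglyMeasurable.integral_prod_right (f := fun s t => w (t + s) * u t)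
    exact ((hw.comp (measurable_snd.add measurable_fst)).mul
      (humeas.comp measurable_snd)).stronglyMeasurable
  have hYZ : ∀ s ∈ Ici (0:ℝ),
      (∫ t in Ici (0:ℝ), w (t + s) * ρ.dens t k j ∂ρ.base) = Z s := by
    intro s hs
    have h1 : (∫ t in Ici (0:ℝ), w (t + s) * ρ.dens t k j ∂ρ.base)
        = ∫ t in Ici (0:ℝ), (Icc (0:ℝ) T).indicator (fun t => w (t + s) * ρ.dens t k j) t
            ∂ρ.base := by
      refine setIntegral_congr_fun measurableSet_Ici (fun t ht => ?_)
      by_cases hmem : t ∈ Icc (0:ℝ) T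
      · rw [indicator_of_mem hmem]
      · rw [indicator_of_notMem hmem]
        have : w (t + s) = 0 := by
          apply h0
          intro hc
          apply hmem
          exact ⟨ht, le_trans (le_add_of_nonneg_right hs) hc.2⟩
        rw [this, zero_mul]
    rw [h1, setIntegral_indicator measurableSet_Icc,
      inter_eq_self_of_subset_right Icc_subset_Ici_self]
    show _ = ∫ t, w (t + s) * u t ∂κ
    rw [hκ, integral_withDensity_eq_integral_smul hgmeas]
    refine (setIntegral_congr_fun measurableSet_Icc (fun t _ => ?_)).symm
    show (g t) • (w (t + s) * u t) = w (t + s) * ρ.dens t k j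
    rw [(mul_smul_comm (g t) (w (t + s)) (u t)).symm, hsmul]
  have hae : (fun s => ∫ t in Ici (0:ℝ), w (t + s) * ρ.dens t k j ∂ρ.base)
      =ᵐ[ν0.restrict (Ici 0)] Z := by
    filter_upwards [ae_restrict_mem measurableSet_Ici] with s hs
    exact hYZ s hs
  exact hZmeas.aestronglyMeasurable.congr hae.symm

/-- Bound for the inner convolution integral. -/
lemma Y_norm_le (ρ : LocalMatrixMeasure n) {T M : ℝ} {w : ℝ → ℂ}
    (hM : ∀ t, ‖w t‖ ≤ M) (h0 : ∀ t, t ∉ Icc (0:ℝ) T → w t = 0) (k j : Fin n)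
    {s : ℝ} (hs : 0 ≤ s) :
    ‖∫ t in Ici (0:ℝ), w (t + s) * ρ.dens t k j ∂ρ.base‖
      ≤ (Icc (0:ℝ) T).indicator
          (fun _ => M * ∫ t in Icc (0:ℝ) T, ‖ρ.dens t k j‖ ∂ρ.base) s := by
  by_cases hsT : s ∈ Icc (0:ℝ) T
  · rw [indicator_of_mem hsT]
    have hle : ‖∫ t in Ici (0:ℝ), w (t + s) * ρ.dens t k j ∂ρ.base‖
        ≤ ∫ t in Ici (0:ℝ), (Icc (0:ℝ) T).indicator (fun t => M * ‖ρ.dens t k j‖) t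
            ∂ρ.base := by
      refine norm_integral_le_of_norm_le ?_ ?_
      · exact ((integrable_indicator_iff measurableSet_Icc).2
          ((ρ.locInt T k j).norm.const_mul M)).restrict
      · filter_upwards [ae_restrict_mem measurableSet_Ici] with t ht
        by_cases hmem : t ∈ Icc (0:ℝ) T
        · rw [indicator_of_mem hmem, norm_mul]
          exact mul_le_mul_of_nonneg_right (hM _) (norm_nonneg _)
        · rw [indicator_of_notMem hmem]
          have hw0 : w (t + s) = 0 := by
            refine h0 _ (fun hc => hmem ⟨ht, ?_⟩)
            exact le_trans (le_add_of_nonneg_right hs) hc.2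
          rw [hw0, zero_mul, norm_zero]
    refine hle.trans (le_of_eq ?_)
    rw [setIntegral_indicator measurableSet_Icc,
      inter_eq_self_of_subset_right Icc_subset_Ici_self, integral_const_mul]
  · rw [indicator_of_notMem hsT]
    have : ∫ t in Ici (0:ℝ), w (t + s) * ρ.dens t k j ∂ρ.base = 0 := by
      rw [setIntegral_congr_fun measurableSet_Ici
        (g := fun _ => (0:ℂ)) (fun t ht => ?_), integral_zero]
      have hTs : T < s := by
        by_contra hc
        exact hsT ⟨hs, not_lt.mp hc⟩
      have : w (t + s) = 0 :=
        h0 _ (fun hc => absurd (lt_of_lt_of_le hTs (le_add_of_nonneg_left ht)) (not_lt.mpr hc.2))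
      rw [this, zero_mul]
    rw [this, norm_zero]


/-- Pointwise bound for the outer convolution integrand. -/
lemma outer_bound (μ ρ : LocalMatrixMeasure n) {T M : ℝ} {w : ℝ → ℂ}
    (hM : ∀ t, ‖w t‖ ≤ M) (h0 : ∀ t, t ∉ Icc (0:ℝ) T → w t = 0)
    (p k j : Fin n) {s : ℝ} (hs : 0 ≤ s) :
    ‖μ.dens s p k * ∫ t in Ici (0:ℝ), w (t + s) * ρ.dens t k j ∂ρ.base‖
      ≤ (Icc (0:ℝ) T).indicator
          (fun s => ‖μ.dens s p k‖ * (M * ∫ t in Icc (0:ℝ) T, ‖ρ.dens t k j‖ ∂ρ.base)) s := by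
  rw [norm_mul]
  have hY := ρ.Y_norm_le hM h0 k j hs
  by_cases hmem : s ∈ Icc (0:ℝ) T
  · rw [indicator_of_mem hmem]
    rw [indicator_of_mem hmem] at hY
    exact mul_le_mul_of_nonneg_left hY (norm_nonneg _)
  · rw [indicator_of_notMem hmem]
    rw [indicator_of_notMem hmem] at hY
    have : ‖∫ t in Ici (0:ℝ), w (t + s) * ρ.dens t k j ∂ρ.base‖ = 0 :=
      le_antisymm hY (norm_nonneg _)
    rw [this, mul_zero]

/-- Integrability of the outer convolution integrand. -/
lemma outer_integrable (μ ρ : LocalMatrixMeasure n) {T M : ℝ} {w : ℝ → ℂ}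
    (hw : Measurable w) (hM : ∀ t, ‖w t‖ ≤ M) (h0 : ∀ t, t ∉ Icc (0:ℝ) T → w t = 0)
    (p k j : Fin n) :
    Integrable
      (fun s => μ.dens s p k * ∫ t in Ici (0:ℝ), w (t + s) * ρ.dens t k j ∂ρ.base)
      (μ.base.restrict (Ici 0)) := by
  refine Integrable.mono'
      (g := (Icc (0:ℝ) T).indicator
        (fun s => ‖μ.dens s p k‖ *
          (M * ∫ t in Icc (0:ℝ) T, ‖ρ.dens t k j‖ ∂ρ.base))) ?_ ?_ ?_
  · exact ((integrable_indicator_iff measurableSet_Icc).2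
      ((μ.locInt T p k).norm.mul_const _)).restrict
  · exact ((μ.meas p k).aestronglyMeasurable.restrict).mul (ρ.aesm_Y hw h0 k j μ.base)
  · filter_upwards [ae_restrict_mem measurableSet_Ici] with s hs
    exact outer_bound μ ρ hM h0 p k j hs

/-- The function-level resolvent identity for weight `w` in column `j`. -/
def Ident (μ ρ : LocalMatrixMeasure n) (j : Fin n) (w : ℝ → ℂ) : Prop :=
  ∀ i, ∫ t, w t * ρ.dens t i j ∂ρ.base
      = ∫ t, w t * μ.dens t i j ∂μ.base
        + ∑ k, ∫ s in Ici (0:ℝ),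
            μ.dens s i k * ∫ t in Ici (0:ℝ), w (t + s) * ρ.dens t k j ∂ρ.base ∂μ.base

lemma ident_indicator (μ ρ : LocalMatrixMeasure n) (hρ : IsResolvent μ ρ)
    {E : Set ℝ} (hE : MeasurableSet E) (hEb : Bornology.IsBounded E) (j : Fin n) :
    Ident μ ρ j (E.indicator fun _ => (1:ℂ)) := by
  intro i
  have hmul : ∀ (g : ℝ → ℂ) (t : ℝ), E.indicator (fun _ => (1:ℂ)) t * g t
      = E.indicator g t := by
    intro g t
    by_cases ht : t ∈ E <;> simp [ht]
  have h2 : ρ.val E = μ.val E + μ.conv ρ E := sub_eq_iff_eq_add.mp (hρ E hE hEb).1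
  have h3 : ρ.val E i j = μ.val E i j + μ.conv ρ E i j := by rw [h2, Matrix.add_apply]
  have hL : ∫ t, E.indicator (fun _ => (1:ℂ)) t * ρ.dens t i j ∂ρ.base = ρ.val E i j := by
    rw [show (fun t => E.indicator (fun _ => (1:ℂ)) t * ρ.dens t i j)
      = E.indicator (fun t => ρ.dens t i j) from funext (hmul _)]
    rw [integral_indicator hE]
    rfl
  have hMu : ∫ t, E.indicator (fun _ => (1:ℂ)) t * μ.dens t i j ∂μ.base = μ.val E i j := by
    rw [show (fun t => E.indicator (fun _ => (1:ℂ)) t * μ.dens t i j)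
      = E.indicator (fun t => μ.dens t i j) from funext (hmul _)]
    rw [integral_indicator hE]
    rfl
  have hconv : μ.conv ρ E i j
      = ∑ k, ∫ s in Ici (0:ℝ), μ.dens s i k *
          ∫ t in Ici (0:ℝ), E.indicator (fun _ => (1:ℂ)) (t + s) * ρ.dens t k j ∂ρ.base
          ∂μ.base := by
    show (∑ k, ∫ s in Ici (0:ℝ),
        μ.dens s i k * ρ.val ((· + s) ⁻¹' E ∩ Ici 0) k j ∂μ.base) = _
    refine Finset.sum_congr rfl fun k _ => ?_
    refine setIntegral_congr_fun measurableSet_Ici fun s _ => ?_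
    congr 1
    have hpt : ∀ t : ℝ, E.indicator (fun _ => (1:ℂ)) (t + s) * ρ.dens t k j
        = ((· + s) ⁻¹' E).indicator (fun t => ρ.dens t k j) t := by
      intro t
      by_cases ht : t + s ∈ E
      · have ht' : t ∈ (· + s) ⁻¹' E := ht
        simp [ht, ht']
      · have ht' : t ∉ (· + s) ⁻¹' E := ht
        simp [ht, ht']
    show (∫ t in (· + s) ⁻¹' E ∩ Ici 0, ρ.dens t k j ∂ρ.base) = _
    rw [show (fun t => E.indicator (fun _ => (1:ℂ)) (t + s) * ρ.dens t k j)
      = ((· + s) ⁻¹' E).indicator (fun t => ρ.dens t k j) from funext hpt]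
    rw [setIntegral_indicator (hE.preimage (measurable_add_const s)), inter_comm]
  rw [hL, h3, ← hMu, hconv]

lemma Ident.smul {μ ρ : LocalMatrixMeasure n} {j : Fin n} {w : ℝ → ℂ}
    (hw : Ident μ ρ j w) (c : ℂ) : Ident μ ρ j (fun t => c * w t) := by
  intro i
  have h := hw i
  have hL : ∫ t, (c * w t) * ρ.dens t i j ∂ρ.base
      = c * ∫ t, w t * ρ.dens t i j ∂ρ.base := by
    simp only [mul_assoc]
    exact integral_const_mul c _
  rw [hL, h, mul_add]
  congr 1
  · simp only [mul_assoc]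
    exact (integral_const_mul c _).symm
  · rw [Finset.mul_sum]
    refine Finset.sum_congr rfl fun k _ => ?_
    rw [← integral_const_mul]
    refine setIntegral_congr_fun measurableSet_Ici fun s _ => ?_
    rw [← mul_assoc, mul_comm c (μ.dens s i k), mul_assoc]
    congr 1
    rw [← integral_const_mul]
    simp only [mul_assoc]

lemma Ident.add {μ ρ : LocalMatrixMeasure n} {j : Fin n} {T : ℝ} {w1 w2 : ℝ → ℂ}
    (hm1 : Measurable w1) (hm2 : Measurable w2)
    {M1 M2 : ℝ} (hb1 : ∀ t, ‖w1 t‖ ≤ M1) (hb2 : ∀ t, ‖w2 t‖ ≤ M2)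
    (h01 : ∀ t, t ∉ Icc (0:ℝ) T → w1 t = 0) (h02 : ∀ t, t ∉ Icc (0:ℝ) T → w2 t = 0)
    (h1 : Ident μ ρ j w1) (h2 : Ident μ ρ j w2) :
    Ident μ ρ j (fun t => w1 t + w2 t) := by
  have hzero : ∀ (w : ℝ → ℂ), (∀ t, t ∉ Icc (0:ℝ) T → w t = 0) → ∀ t, T < t → w t = 0 := by
    intro w hw t ht
    exact hw t (fun hc => absurd hc.2 (not_le.mpr ht))
  intro i
  have key : ∀ σ : LocalMatrixMeasure n, ∀ k j' : Fin n,
      ∫ t, (w1 t + w2 t) * σ.dens t k j' ∂σ.base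
        = ∫ t, w1 t * σ.dens t k j' ∂σ.base + ∫ t, w2 t * σ.dens t k j' ∂σ.base := by
    intro σ k j'
    simp only [add_mul]
    exact integral_add (σ.integrable_mul_dens hm1 hb1 (hzero w1 h01) k j')
      (σ.integrable_mul_dens hm2 hb2 (hzero w2 h02) k j')
  have keyY : ∀ k, ∀ s : ℝ, 0 ≤ s →
      ∫ t in Ici (0:ℝ), (w1 (t + s) + w2 (t + s)) * ρ.dens t k j ∂ρ.base
        = (∫ t in Ici (0:ℝ), w1 (t + s) * ρ.dens t k j ∂ρ.base)
          + ∫ t in Ici (0:ℝ), w2 (t + s) * ρ.dens t k j ∂ρ.base := by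
    intro k s hs
    simp only [add_mul]
    refine integral_add ?_ ?_
    · refine (ρ.integrable_mul_dens (T := T) (hm1.comp (measurable_add_const s))
        (fun t => hb1 (t + s)) (fun t ht => hzero w1 h01 (t + s)
          (lt_of_lt_of_le ht (le_add_of_nonneg_right hs))) k j).restrict
    · refine (ρ.integrable_mul_dens (T := T) (hm2.comp (measurable_add_const s))
        (fun t => hb2 (t + s)) (fun t ht => hzero w2 h02 (t + s)
          (lt_of_lt_of_le ht (le_add_of_nonneg_right hs))) k j).restrict
  have hsum : ∀ k : Fin n,
      ∫ s in Ici (0:ℝ), μ.dens s i k *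
          ∫ t in Ici (0:ℝ), (w1 (t + s) + w2 (t + s)) * ρ.dens t k j ∂ρ.base ∂μ.base
        = (∫ s in Ici (0:ℝ), μ.dens s i k *
            ∫ t in Ici (0:ℝ), w1 (t + s) * ρ.dens t k j ∂ρ.base ∂μ.base)
          + ∫ s in Ici (0:ℝ), μ.dens s i k *
              ∫ t in Ici (0:ℝ), w2 (t + s) * ρ.dens t k j ∂ρ.base ∂μ.base := by
    intro k
    have hcongr : ∫ s in Ici (0:ℝ), μ.dens s i k *
          ∫ t in Ici (0:ℝ), (w1 (t + s) + w2 (t + s)) * ρ.dens t k j ∂ρ.base ∂μ.base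
        = ∫ s in Ici (0:ℝ),
            (μ.dens s i k * ∫ t in Ici (0:ℝ), w1 (t + s) * ρ.dens t k j ∂ρ.base
              + μ.dens s i k * ∫ t in Ici (0:ℝ), w2 (t + s) * ρ.dens t k j ∂ρ.base)
            ∂μ.base := by
      refine setIntegral_congr_fun measurableSet_Ici fun s hs => ?_
      rw [keyY k s hs, mul_add]
    rw [hcongr]
    exact integral_add (outer_integrable μ ρ hm1 hb1 h01 i k j)
      (outer_integrable μ ρ hm2 hb2 h02 i k j)
  show ∫ t, (w1 t + w2 t) * ρ.dens t i j ∂ρ.base = _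
  rw [key ρ i j, h1 i, h2 i, key μ i j]
  simp only [hsum, Finset.sum_add_distrib]
  ring

lemma ident_simple (μ ρ : LocalMatrixMeasure n) (hρ : IsResolvent μ ρ) (T : ℝ) (j : Fin n)
    (g : SimpleFunc ℝ ℂ) :
    Ident μ ρ j (fun t => (Icc (0:ℝ) T).indicator (fun _ => (1:ℂ)) t * g t) := by
  induction g using SimpleFunc.induction with
  | @const c E hE =>
    have heq : (fun t => (Icc (0:ℝ) T).indicator (fun _ => (1:ℂ)) t *
        (SimpleFunc.piecewise E hE (SimpleFunc.const ℝ c) (SimpleFunc.const ℝ 0)) t)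
        = fun t => c * (E ∩ Icc (0:ℝ) T).indicator (fun _ => (1:ℂ)) t := by
      funext t
      by_cases h1 : t ∈ E <;> by_cases h2 : t ∈ Icc (0:ℝ) T <;>
        simp [SimpleFunc.piecewise_apply, h1, h2, Set.indicator, Set.mem_inter_iff]
    rw [heq]
    exact (ident_indicator μ ρ hρ (hE.inter measurableSet_Icc)
      ((Metric.isBounded_Icc 0 T).subset inter_subset_right) j).smul c
  | @add f g _ hf hg =>
    obtain ⟨M1, hM1⟩ := f.exists_forall_norm_le
    obtain ⟨M2, hM2⟩ := g.exists_forall_norm_le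
    have hind_le : ∀ t : ℝ, ‖(Icc (0:ℝ) T).indicator (fun _ => (1:ℂ)) t‖ ≤ 1 := by
      intro t
      by_cases ht : t ∈ Icc (0:ℝ) T <;> simp [ht]
    have hbd : ∀ (h : SimpleFunc ℝ ℂ) (M : ℝ), (∀ x, ‖h x‖ ≤ M) →
        ∀ t, ‖(Icc (0:ℝ) T).indicator (fun _ => (1:ℂ)) t * h t‖ ≤ M := by
      intro h M hM t
      have hM0 : 0 ≤ M := le_trans (norm_nonneg _) (hM t)
      rw [norm_mul]
      calc ‖(Icc (0:ℝ) T).indicator (fun _ => (1:ℂ)) t‖ * ‖h t‖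
          ≤ 1 * M := mul_le_mul (hind_le t) (hM t) (norm_nonneg _) one_pos.le
        _ = M := one_mul M
    have hz : ∀ (h : SimpleFunc ℝ ℂ), ∀ t, t ∉ Icc (0:ℝ) T →
        (Icc (0:ℝ) T).indicator (fun _ => (1:ℂ)) t * h t = 0 := by
      intro h t ht
      rw [indicator_of_notMem ht, zero_mul]
    have hmeas : ∀ (h : SimpleFunc ℝ ℂ),
        Measurable fun t => (Icc (0:ℝ) T).indicator (fun _ => (1:ℂ)) t * h t :=
      fun h => (measurable_const.indicator measurableSet_Icc).mul h.measurable
    have := Ident.add (μ := μ) (ρ := ρ) (j := j) (T := T)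
      (hmeas f) (hmeas g) (hbd f M1 hM1) (hbd g M2 hM2) (hz f) (hz g) hf hg
    have heq : (fun t => ((Icc (0:ℝ) T).indicator (fun _ => (1:ℂ)) t * f t)
        + ((Icc (0:ℝ) T).indicator (fun _ => (1:ℂ)) t * g t))
        = fun t => (Icc (0:ℝ) T).indicator (fun _ => (1:ℂ)) t * (f + g) t := by
      funext t
      simp [mul_add]
    rwa [heq] at this

lemma ident_of_bounded (μ ρ : LocalMatrixMeasure n) (hρ : IsResolvent μ ρ) {T : ℝ}
    {f : ℝ → ℂ} (hf : Measurable f) (hbd : ∀ t, ‖f t‖ ≤ 1)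
    (h0 : ∀ t, t ∉ Icc (0:ℝ) T → f t = 0) (j : Fin n) : Ident μ ρ j f := by
  intro i
  set gm : ℕ → SimpleFunc ℝ ℂ :=
    fun m => SimpleFunc.approxOn f hf univ 0 (mem_univ 0) m with hgm
  have hgm_tendsto : ∀ x, Tendsto (fun m => gm m x) atTop (𝓝 (f x)) := fun x =>
    SimpleFunc.tendsto_approxOn hf (mem_univ 0) (by simp)
  have hgm_bd : ∀ m x, ‖gm m x‖ ≤ 2 * ‖f x‖ := by
    intro m x
    have := SimpleFunc.norm_approxOn_zero_le hf (mem_univ 0) x m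
    rw [hgm]
    linarith
  have hgm_le2 : ∀ m x, ‖(gm m) x‖ ≤ 2 := by
    intro m x
    have h1 := hgm_bd m x
    have h2 := hbd x
    linarith
  have hgm0 : ∀ m x, x ∉ Icc (0:ℝ) T → (gm m) x = 0 := by
    intro m x hx
    have h1 := hgm_bd m x
    rw [h0 x hx] at h1
    simp only [norm_zero, mul_zero] at h1
    exact norm_le_zero_iff.mp h1
  have hgmIdent : ∀ m, Ident μ ρ j (gm m) := by
    intro m
    have h := ident_simple μ ρ hρ T j (gm m)
    have heq : (fun t => (Icc (0:ℝ) T).indicator (fun _ => (1:ℂ)) t * (gm m) t)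
        = ⇑(gm m) := by
      funext t
      by_cases ht : t ∈ Icc (0:ℝ) T
      · simp [ht]
      · simp [indicator_of_notMem ht, hgm0 m t ht]
    rwa [heq] at h
  -- convergence of the left-hand sides
  have hLHS : Tendsto (fun m => ∫ t, (gm m) t * ρ.dens t i j ∂ρ.base) atTop
      (𝓝 (∫ t, f t * ρ.dens t i j ∂ρ.base)) := by
    refine tendsto_integral_of_dominated_convergence
      ((Icc (0:ℝ) T).indicator (fun t => 2 * ‖ρ.dens t i j‖)) ?_ ?_ ?_ ?_
    · exact fun m => ((gm m).measurable.mul (ρ.meas i j)).aestronglyMeasurable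
    · exact (integrable_indicator_iff measurableSet_Icc).2
        ((ρ.locInt T i j).norm.const_mul 2)
    · intro m
      refine ae_of_all _ fun t => ?_
      by_cases ht : t ∈ Icc (0:ℝ) T
      · rw [indicator_of_mem ht, norm_mul]
        exact mul_le_mul_of_nonneg_right (hgm_le2 m t) (norm_nonneg _)
      · rw [indicator_of_notMem ht, hgm0 m t ht, zero_mul, norm_zero]
    · exact ae_of_all _ fun t => (hgm_tendsto t).mul_const _
  -- convergence of the μ-part
  have hMu : Tendsto (fun m => ∫ t, (gm m) t * μ.dens t i j ∂μ.base) atTop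
      (𝓝 (∫ t, f t * μ.dens t i j ∂μ.base)) := by
    refine tendsto_integral_of_dominated_convergence
      ((Icc (0:ℝ) T).indicator (fun t => 2 * ‖μ.dens t i j‖)) ?_ ?_ ?_ ?_
    · exact fun m => ((gm m).measurable.mul (μ.meas i j)).aestronglyMeasurable
    · exact (integrable_indicator_iff measurableSet_Icc).2
        ((μ.locInt T i j).norm.const_mul 2)
    · intro m
      refine ae_of_all _ fun t => ?_
      by_cases ht : t ∈ Icc (0:ℝ) T
      · rw [indicator_of_mem ht, norm_mul]
        exact mul_le_mul_of_nonneg_right (hgm_le2 m t) (norm_nonneg _)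
      · rw [indicator_of_notMem ht, hgm0 m t ht, zero_mul, norm_zero]
    · exact ae_of_all _ fun t => (hgm_tendsto t).mul_const _
  -- convergence of the convolution parts
  have hOuter : ∀ k : Fin n, Tendsto
      (fun m => ∫ s in Ici (0:ℝ), μ.dens s i k *
        ∫ t in Ici (0:ℝ), (gm m) (t + s) * ρ.dens t k j ∂ρ.base ∂μ.base) atTop
      (𝓝 (∫ s in Ici (0:ℝ), μ.dens s i k *
        ∫ t in Ici (0:ℝ), f (t + s) * ρ.dens t k j ∂ρ.base ∂μ.base)) := by
    intro k
    refine tendsto_integral_of_dominated_convergence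
      ((Icc (0:ℝ) T).indicator
        (fun s => ‖μ.dens s i k‖ *
          (2 * ∫ t in Icc (0:ℝ) T, ‖ρ.dens t k j‖ ∂ρ.base))) ?_ ?_ ?_ ?_
    · exact fun m => ((μ.meas i k).aestronglyMeasurable.restrict).mul
        (ρ.aesm_Y (gm m).measurable (hgm0 m) k j μ.base)
    · exact ((integrable_indicator_iff measurableSet_Icc).2
        ((μ.locInt T i k).norm.mul_const _)).restrict
    · intro m
      filter_upwards [ae_restrict_mem measurableSet_Ici] with s hs
      exact outer_bound μ ρ (hgm_le2 m) (hgm0 m) i k j hs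
    · filter_upwards [ae_restrict_mem measurableSet_Ici] with s hs
      refine Tendsto.const_mul _ ?_
      refine tendsto_integral_of_dominated_convergence
        ((Icc (0:ℝ) T).indicator (fun t => 2 * ‖ρ.dens t k j‖)) ?_ ?_ ?_ ?_
      · exact fun m => (((gm m).measurable.comp (measurable_add_const s)).mul
          (ρ.meas k j)).aestronglyMeasurable
      · exact ((integrable_indicator_iff measurableSet_Icc).2
          ((ρ.locInt T k j).norm.const_mul 2)).restrict
      · intro m
        filter_upwards [ae_restrict_mem measurableSet_Ici] with t ht
        by_cases hmem : t ∈ Icc (0:ℝ) T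
        · rw [indicator_of_mem hmem, norm_mul]
          exact mul_le_mul_of_nonneg_right (hgm_le2 m _) (norm_nonneg _)
        · rw [indicator_of_notMem hmem]
          have hts : t + s ∉ Icc (0:ℝ) T := by
            intro hc
            exact hmem ⟨ht, le_trans (le_add_of_nonneg_right hs) hc.2⟩
          rw [hgm0 m _ hts, zero_mul, norm_zero]
      · exact ae_of_all _ fun t => (hgm_tendsto (t + s)).mul_const _
  have hRHS : Tendsto (fun m => (∫ t, (gm m) t * μ.dens t i j ∂μ.base)
      + ∑ k, ∫ s in Ici (0:ℝ), μ.dens s i k *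
          ∫ t in Ici (0:ℝ), (gm m) (t + s) * ρ.dens t k j ∂ρ.base ∂μ.base) atTop
      (𝓝 ((∫ t, f t * μ.dens t i j ∂μ.base)
        + ∑ k, ∫ s in Ici (0:ℝ), μ.dens s i k *
            ∫ t in Ici (0:ℝ), f (t + s) * ρ.dens t k j ∂ρ.base ∂μ.base)) :=
    hMu.add (tendsto_finset_sum _ (fun k _ => hOuter k))
  exact tendsto_nhds_unique (hLHS.congr (fun m => hgmIdent m i)) hRHS

lemma key_estimate (μ ρ : LocalMatrixMeasure n) (hρ : IsResolvent μ ρ)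
    (hdet : Matrix.det ((1 : Matrix (Fin n) (Fin n) ℂ) - μ.val {0}) ≠ 0)
    {γ α : ℝ} (hγ : 0 < γ) (hα : γ ≤ α)
    (hμγ : ∀ p k, Integrable (fun t => Real.exp (-γ * t) * ‖μ.dens t p k‖) μ.base)
    {T : ℝ} (hT : 0 ≤ T) (i j : Fin n) :
    ∫ t in Icc (0:ℝ) T, Real.exp (-α * t) * ‖ρ.dens t i j‖ ∂ρ.base
      ≤ ∑ p, ‖((1 : Matrix (Fin n) (Fin n) ℂ) - μ.val {0})⁻¹ i p‖ *
          ((∫ t in Ici (0:ℝ), Real.exp (-γ * t) * ‖μ.dens t p j‖ ∂μ.base)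
           + ∑ k, (∫ s in Ioi (0:ℝ), Real.exp (-α * s) * ‖μ.dens s p k‖ ∂μ.base)
               * ∫ t in Icc (0:ℝ) T, Real.exp (-α * t) * ‖ρ.dens t k j‖ ∂ρ.base) := by
  have hα0 : 0 ≤ α := le_trans hγ.le hα
  -- integrability of exponentially weighted μ-densities
  have hμα_int : ∀ p k, Integrable (fun s => Real.exp (-α * s) * ‖μ.dens s p k‖) μ.base := by
    intro p k
    refine Integrable.mono' (hμγ p k) ?_ ?_
    · exact ((Real.measurable_exp.comp (measurable_id.const_mul (-α))).mul
        (μ.meas p k).norm).aestronglyMeasurable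
    · filter_upwards [μ.ae_nonneg] with s hs
      rw [Real.norm_eq_abs, abs_of_nonneg (mul_nonneg (Real.exp_pos _).le (norm_nonneg _))]
      refine mul_le_mul_of_nonneg_right ?_ (norm_nonneg _)
      exact Real.exp_le_exp.2 (by nlinarith)
  -- local integrability of the weighted ρ-densities
  have hvint : ∀ k T' , IntegrableOn (fun t => Real.exp (-α * t) * ‖ρ.dens t k j‖)
      (Icc (0:ℝ) T') ρ.base := by
    intro k T'
    refine Integrable.mono' (ρ.locInt T' k j).norm ?_ ?_
    · exact ((Real.measurable_exp.comp (measurable_id.const_mul (-α))).mul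
        (ρ.meas k j).norm).aestronglyMeasurable
    · filter_upwards [ae_restrict_mem measurableSet_Icc] with t ht
      rw [Real.norm_eq_abs, abs_of_nonneg (mul_nonneg (Real.exp_pos _).le (norm_nonneg _))]
      calc Real.exp (-α * t) * ‖ρ.dens t k j‖
          ≤ 1 * ‖ρ.dens t k j‖ := by
            refine mul_le_mul_of_nonneg_right ?_ (norm_nonneg _)
            rw [← Real.exp_zero]
            exact Real.exp_le_exp.2 (by nlinarith [ht.1])
        _ = ‖ρ.dens t k j‖ := one_mul _
  set v : Fin n → ℝ :=
    fun k => ∫ t in Icc (0:ℝ) T, Real.exp (-α * t) * ‖ρ.dens t k j‖ ∂ρ.base with hv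
  -- the test function
  set u : ℝ → ℂ :=
    fun t => (‖ρ.dens t i j‖ : ℂ)⁻¹ * (starRingEnd ℂ) (ρ.dens t i j) with hu
  have humeas : Measurable u :=
    ((Complex.measurable_ofReal.comp (ρ.meas i j).norm).inv).mul
      (Complex.continuous_conj.measurable.comp (ρ.meas i j))
  have hu_le : ∀ t, ‖u t‖ ≤ 1 := by
    intro t
    by_cases h : ρ.dens t i j = 0
    · simp [hu, h]
    · have hr : ‖ρ.dens t i j‖ ≠ 0 := norm_ne_zero_iff.mpr h
      rw [hu]
      simp only [norm_mul, norm_inv, Complex.norm_real, RCLike.norm_conj,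
        Real.norm_eq_abs, abs_of_nonneg (norm_nonneg _)]
      rw [inv_mul_cancel₀ hr]
  set f : ℝ → ℂ :=
    fun t => (Icc (0:ℝ) T).indicator (fun t => (Real.exp (-α * t) : ℂ) * u t) t with hf
  have hfmeas : Measurable f := by
    refine Measurable.indicator ?_ measurableSet_Icc
    exact (Complex.measurable_ofReal.comp
      (Real.measurable_exp.comp (measurable_id.const_mul (-α)))).mul humeas
  have hf_exp : ∀ t, ‖f t‖ ≤ (Icc (0:ℝ) T).indicator (fun t => Real.exp (-α * t)) t := by
    intro t
    by_cases ht : t ∈ Icc (0:ℝ) T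
    · rw [hf]
      simp only [indicator_of_mem ht, norm_mul, Complex.norm_real, Real.norm_eq_abs,
        abs_of_nonneg (Real.exp_pos _).le]
      calc Real.exp (-α * t) * ‖u t‖ ≤ Real.exp (-α * t) * 1 :=
            mul_le_mul_of_nonneg_left (hu_le t) (Real.exp_pos _).le
        _ = Real.exp (-α * t) := mul_one _
    · rw [hf]
      simp [indicator_of_notMem ht]
  have hf_le : ∀ t, ‖f t‖ ≤ 1 := by
    intro t
    refine (hf_exp t).trans ?_
    by_cases ht : t ∈ Icc (0:ℝ) T
    · rw [indicator_of_mem ht, ← Real.exp_zero]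
      exact Real.exp_le_exp.2 (by nlinarith [ht.1])
    · rw [indicator_of_notMem ht]; norm_num
  have hf0 : ∀ t, t ∉ Icc (0:ℝ) T → f t = 0 := by
    intro t ht
    rw [hf]; exact indicator_of_notMem ht _
  have hIdent := ident_of_bounded μ ρ hρ hfmeas hf_le hf0 j
  set X : Fin n → ℂ := fun p => ∫ t, f t * ρ.dens t p j ∂ρ.base with hX
  set Y : Fin n → ℝ → ℂ :=
    fun k s => ∫ t in Ici (0:ℝ), f (t + s) * ρ.dens t k j ∂ρ.base with hY
  set c : Fin n → ℂ := fun p => ∫ t, f t * μ.dens t p j ∂μ.base with hc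
  set R : Fin n → Fin n → ℂ :=
    fun p k => ∫ s in Ioi (0:ℝ), μ.dens s p k * Y k s ∂μ.base with hR
  -- split the outer integral at the atom {0}
  have hsplit : ∀ p k, ∫ s in Ici (0:ℝ), μ.dens s p k * Y k s ∂μ.base
      = R p k + μ.val {0} p k * X k := by
    intro p k
    have hGint : IntegrableOn (fun s => μ.dens s p k * Y k s) (Ici 0) μ.base :=
      outer_integrable μ ρ hfmeas hf_le hf0 p k j
    have hun : (Ici (0:ℝ)) = Ioi 0 ∪ {0} := (Ioi_union_left).symm
    have hdisj : Disjoint (Ioi (0:ℝ)) {0} := by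
      rw [Set.disjoint_singleton_right]
      simp
    rw [hun, setIntegral_union hdisj (measurableSet_singleton 0)
      (hGint.mono_set (by rw [hun]; exact subset_union_left))
      (hGint.mono_set (by rw [hun]; exact subset_union_right))]
    congr 1
    -- the singleton part
    rw [Measure.restrict_singleton, integral_smul_measure, integral_dirac]
    have hY0 : Y k 0 = X k := by
      rw [hY, hX]
      simp only [add_zero]
      rw [ρ.restrict_Ici]
    have hA : μ.val {0} p k = (μ.base {0}).toReal • μ.dens 0 p k := by
      show (∫ t in {(0:ℝ)}, μ.dens t p k ∂μ.base) = _
      rw [Measure.restrict_singleton, integral_smul_measure, integral_dirac]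
    rw [hY0, hA, smul_mul_assoc]
  have hvec : ∀ p, X p = c p + ∑ k, (R p k + μ.val {0} p k * X k) := by
    intro p
    have h := hIdent p
    rw [hX]
    show (∫ t, f t * ρ.dens t p j ∂ρ.base) = _
    rw [h]
    congr 1
    exact Finset.sum_congr rfl fun k _ => hsplit p k
  set B := ((1 : Matrix (Fin n) (Fin n) ℂ) - μ.val {0})⁻¹ with hB
  have hBinv : B * ((1 : Matrix (Fin n) (Fin n) ℂ) - μ.val {0}) = 1 :=
    Matrix.nonsing_inv_mul _ (isUnit_iff_ne_zero.mpr hdet)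
  have hmv : ∀ p, (((1 : Matrix (Fin n) (Fin n) ℂ) - μ.val {0}).mulVec X) p
      = c p + ∑ k, R p k := by
    intro p
    have : (((1 : Matrix (Fin n) (Fin n) ℂ) - μ.val {0}).mulVec X) p
        = X p - ∑ k, μ.val {0} p k * X k := by
      simp [Matrix.mulVec, dotProduct, Matrix.sub_apply, Matrix.one_apply, sub_mul,
        Finset.sum_sub_distrib, ite_mul, Finset.sum_ite_eq]
    rw [this, hvec p, Finset.sum_add_distrib]
    ring
  have hXsol : X = B.mulVec (fun p => c p + ∑ k, R p k) := by
    calc X = ((1 : Matrix (Fin n) (Fin n) ℂ)).mulVec X := (Matrix.one_mulVec X).symm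
      _ = (B * ((1 : Matrix (Fin n) (Fin n) ℂ) - μ.val {0})).mulVec X := by rw [hBinv]
      _ = B.mulVec ((((1 : Matrix (Fin n) (Fin n) ℂ) - μ.val {0})).mulVec X) :=
          (Matrix.mulVec_mulVec _ _ _).symm
      _ = B.mulVec (fun p => c p + ∑ k, R p k) := by
        rw [show (((1 : Matrix (Fin n) (Fin n) ℂ) - μ.val {0})).mulVec X
          = (fun p => c p + ∑ k, R p k) from funext hmv]
  have hXi : X i = ∑ p, B i p * (c p + ∑ k, R p k) := by
    rw [hXsol]
    rfl
  -- v i = re (X i)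
  have hXint : Integrable (fun t => f t * ρ.dens t i j) ρ.base :=
    ρ.integrable_mul_dens hfmeas hf_le
      (fun t ht => hf0 t (fun hc => absurd hc.2 (not_le.mpr ht))) i j
  have hre : ∀ t, (f t * ρ.dens t i j).re
      = (Icc (0:ℝ) T).indicator (fun t => Real.exp (-α * t) * ‖ρ.dens t i j‖) t := by
    intro t
    by_cases ht : t ∈ Icc (0:ℝ) T
    · rw [hf]
      simp only [indicator_of_mem ht]
      by_cases h : ρ.dens t i j = 0
      · simp [h]
      · have hr : ‖ρ.dens t i j‖ ≠ 0 := norm_ne_zero_iff.mpr h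
        have key : (u t) * ρ.dens t i j = (‖ρ.dens t i j‖ : ℂ) := by
          rw [hu, mul_assoc, mul_comm ((starRingEnd ℂ) (ρ.dens t i j)) (ρ.dens t i j),
            Complex.mul_conj]
          rw [Complex.normSq_eq_norm_sq]
          rw [show ((‖ρ.dens t i j‖ ^ 2 : ℝ) : ℂ) = (‖ρ.dens t i j‖ : ℂ) ^ 2 by push_cast; ring]
          have hC : (‖ρ.dens t i j‖ : ℂ) ≠ 0 := by
            simpa using hr
          rw [sq, ← mul_assoc, inv_mul_cancel₀ hC, one_mul]
        rw [mul_assoc, key, ← Complex.ofReal_mul, Complex.ofReal_re]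
    · rw [indicator_of_notMem ht, hf0 t ht, zero_mul, Complex.zero_re]
  have hviXre : v i = (X i).re := by
    rw [hX]
    show v i = (∫ t, f t * ρ.dens t i j ∂ρ.base).re
    rw [← RCLike.re_eq_complex_re, ← integral_re hXint, RCLike.re_eq_complex_re]
    show v i = ∫ t, (f t * ρ.dens t i j).re ∂ρ.base
    rw [show (fun t => (f t * ρ.dens t i j).re)
      = (Icc (0:ℝ) T).indicator (fun t => Real.exp (-α * t) * ‖ρ.dens t i j‖)
      from funext hre]
    rw [integral_indicator measurableSet_Icc]
  have hvle : v i ≤ ‖X i‖ := by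
    rw [hviXre]
    exact Complex.re_le_norm _
  -- bound ‖c p‖
  have hcb : ∀ p, ‖c p‖ ≤ ∫ t in Ici (0:ℝ), Real.exp (-γ * t) * ‖μ.dens t p j‖ ∂μ.base := by
    intro p
    have h1 : ‖c p‖ ≤ ∫ t, (Icc (0:ℝ) T).indicator
        (fun t => Real.exp (-α * t) * ‖μ.dens t p j‖) t ∂μ.base := by
      refine norm_integral_le_of_norm_le
        ((integrable_indicator_iff measurableSet_Icc).2 (hμα_int p j).integrableOn) ?_
      refine ae_of_all _ fun t => ?_
      by_cases ht : t ∈ Icc (0:ℝ) T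
      · rw [indicator_of_mem ht, norm_mul]
        refine mul_le_mul_of_nonneg_right ?_ (norm_nonneg _)
        have := hf_exp t
        rwa [indicator_of_mem ht] at this
      · rw [indicator_of_notMem ht, hf0 t ht, zero_mul, norm_zero]
    refine h1.trans ?_
    rw [integral_indicator measurableSet_Icc]
    calc ∫ t in Icc (0:ℝ) T, Real.exp (-α * t) * ‖μ.dens t p j‖ ∂μ.base
        ≤ ∫ t in Icc (0:ℝ) T, Real.exp (-γ * t) * ‖μ.dens t p j‖ ∂μ.base := by
          refine setIntegral_mono_on (hμα_int p j).integrableOn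
            (hμγ p j).integrableOn measurableSet_Icc fun t ht => ?_
          exact mul_le_mul_of_nonneg_right (Real.exp_le_exp.2 (by nlinarith [ht.1]))
            (norm_nonneg _)
      _ ≤ ∫ t in Ici (0:ℝ), Real.exp (-γ * t) * ‖μ.dens t p j‖ ∂μ.base := by
          refine setIntegral_mono_set (hμγ p j).integrableOn ?_ ?_
          · exact ae_of_all _ fun t => mul_nonneg (Real.exp_pos _).le (norm_nonneg _)
          · exact HasSubset.Subset.eventuallyLE Icc_subset_Ici_self
  -- bound ‖Y k s‖
  have hYb : ∀ k, ∀ s : ℝ, 0 ≤ s → ‖Y k s‖ ≤ Real.exp (-α * s) * v k := by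
    intro k s hs
    have h1 : ‖Y k s‖ ≤ ∫ t in Ici (0:ℝ), Real.exp (-α * s) *
        ((Icc (0:ℝ) T).indicator (fun t => Real.exp (-α * t) * ‖ρ.dens t k j‖) t)
        ∂ρ.base := by
      refine norm_integral_le_of_norm_le ?_ ?_
      · exact (((integrable_indicator_iff measurableSet_Icc).2
          (hvint k T)).const_mul _).restrict
      · filter_upwards [ae_restrict_mem measurableSet_Ici] with t ht
        by_cases hmem : t + s ∈ Icc (0:ℝ) T
        · have htm : t ∈ Icc (0:ℝ) T :=
            ⟨ht, le_trans (le_add_of_nonneg_right hs) hmem.2⟩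
          rw [indicator_of_mem htm, norm_mul]
          have hfe := hf_exp (t + s)
          rw [indicator_of_mem hmem] at hfe
          calc ‖f (t + s)‖ * ‖ρ.dens t k j‖
              ≤ Real.exp (-α * (t + s)) * ‖ρ.dens t k j‖ :=
                mul_le_mul_of_nonneg_right hfe (norm_nonneg _)
            _ = Real.exp (-α * s) * (Real.exp (-α * t) * ‖ρ.dens t k j‖) := by
                rw [show -α * (t + s) = -α * t + -α * s by ring, Real.exp_add]
                ring
        · rw [hf0 (t + s) hmem, zero_mul, norm_zero]
          exact mul_nonneg (Real.exp_pos _).le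
            (indicator_nonneg (fun t _ => mul_nonneg (Real.exp_pos _).le (norm_nonneg _)) t)
    refine h1.trans (le_of_eq ?_)
    rw [integral_const_mul, setIntegral_indicator measurableSet_Icc,
      inter_eq_self_of_subset_right Icc_subset_Ici_self]
  -- bound ‖R p k‖
  have hRb : ∀ p k, ‖R p k‖
      ≤ (∫ s in Ioi (0:ℝ), Real.exp (-α * s) * ‖μ.dens s p k‖ ∂μ.base) * v k := by
    intro p k
    have h1 : ‖R p k‖ ≤ ∫ s in Ioi (0:ℝ),
        (Real.exp (-α * s) * ‖μ.dens s p k‖) * v k ∂μ.base := by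
      refine norm_integral_le_of_norm_le (((hμα_int p k).mul_const (v k)).restrict) ?_
      filter_upwards [ae_restrict_mem measurableSet_Ioi] with s hs
      rw [norm_mul]
      calc ‖μ.dens s p k‖ * ‖Y k s‖
          ≤ ‖μ.dens s p k‖ * (Real.exp (-α * s) * v k) :=
            mul_le_mul_of_nonneg_left (hYb k s (le_of_lt hs)) (norm_nonneg _)
        _ = (Real.exp (-α * s) * ‖μ.dens s p k‖) * v k := by ring
    refine h1.trans (le_of_eq ?_)
    rw [integral_mul_const]
  -- final chain
  have hvnonneg : ∀ k, (0:ℝ) ≤ v k := by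
    intro k
    exact setIntegral_nonneg measurableSet_Icc
      (fun t _ => mul_nonneg (Real.exp_pos _).le (norm_nonneg _))
  calc v i ≤ ‖X i‖ := hvle
    _ = ‖∑ p, B i p * (c p + ∑ k, R p k)‖ := by rw [hXi]
    _ ≤ ∑ p, ‖B i p * (c p + ∑ k, R p k)‖ := norm_sum_le _ _
    _ ≤ ∑ p, ‖B i p‖ *
          ((∫ t in Ici (0:ℝ), Real.exp (-γ * t) * ‖μ.dens t p j‖ ∂μ.base)
           + ∑ k, (∫ s in Ioi (0:ℝ), Real.exp (-α * s) * ‖μ.dens s p k‖ ∂μ.base) * v k) := by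
      refine Finset.sum_le_sum fun p _ => ?_
      rw [norm_mul]
      refine mul_le_mul_of_nonneg_left ?_ (norm_nonneg _)
      calc ‖c p + ∑ k, R p k‖ ≤ ‖c p‖ + ‖∑ k, R p k‖ := norm_add_le _ _
        _ ≤ ‖c p‖ + ∑ k, ‖R p k‖ := by
            refine add_le_add_right (norm_sum_le _ _) _
        _ ≤ _ := add_le_add (hcb p) (Finset.sum_le_sum fun k _ => hRb p k)

end LocalMatrixMeasure


/-- The exponential estimate in Theorem A.12 of Diekmann–Verduyn Lunel: if
`det[I − μ({0})] ≠ 0` and the exponentially weighted measure `μ^γ` (with density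
`e^{−γs}` relative to `μ`) has finite total variation for some `γ > 0`, then there is
`α ≥ γ` such that `ρ^α` has finite total variation, where `ρ` is the resolvent of `μ`. -/
theorem resolvent_exponential_estimate {n : ℕ} (μ ρ : LocalMatrixMeasure n)
    (hdet : Matrix.det ((1 : Matrix (Fin n) (Fin n) ℂ) - μ.val {0}) ≠ 0)
    (hρ : LocalMatrixMeasure.IsResolvent μ ρ)
    (γ : ℝ) (hγ : 0 < γ)
    (hμγ : ∀ i j, Integrable (fun t => Real.exp (-γ * t) * ‖μ.dens t i j‖) μ.base) :
    ∃ α : ℝ, γ ≤ α ∧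
      ∀ i j, Integrable (fun t => Real.exp (-α * t) * ‖ρ.dens t i j‖) ρ.base := by
  classical
  set B := ((1 : Matrix (Fin n) (Fin n) ℂ) - μ.val {0})⁻¹ with hB
  have hμγ' : ∀ p k, Integrable (fun t => Real.exp (-γ * t) * ‖μ.dens t p k‖) μ.base := by
    intro p k
    have h := hμγ p k
    simpa using h
  have hm_tendsto : ∀ p k : Fin n, Tendsto
      (fun N : ℕ => ∫ s in Ioi (0:ℝ), Real.exp (-(γ + N) * s) * ‖μ.dens s p k‖ ∂μ.base)
      atTop (𝓝 0) := by
    intro p k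
    have hmain : Tendsto
        (fun N : ℕ => ∫ s in Ioi (0:ℝ), Real.exp (-(γ + N) * s) * ‖μ.dens s p k‖ ∂μ.base)
        atTop (𝓝 (∫ _ in Ioi (0:ℝ), (0:ℝ) ∂μ.base)) := by
      refine tendsto_integral_of_dominated_convergence
        (fun s => Real.exp (-γ * s) * ‖μ.dens s p k‖) ?_ ?_ ?_ ?_
      · exact fun N => ((Real.measurable_exp.comp
          (measurable_id.const_mul (-(γ + N)))).mul
          (μ.meas p k).norm).aestronglyMeasurable
      · exact (hμγ' p k).restrict
      · intro N
        filter_upwards [ae_restrict_mem measurableSet_Ioi] with s hs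
        rw [Real.norm_eq_abs, abs_of_nonneg (mul_nonneg (Real.exp_pos _).le (norm_nonneg _))]
        refine mul_le_mul_of_nonneg_right (Real.exp_le_exp.2 ?_) (norm_nonneg _)
        have hs0 : 0 < s := hs
        nlinarith [Nat.cast_nonneg (α := ℝ) N]
      · filter_upwards [ae_restrict_mem measurableSet_Ioi] with s hs
        have hs0 : 0 < s := hs
        have hten : Tendsto (fun N : ℕ => Real.exp (-(γ + N) * s)) atTop (𝓝 0) := by
          have hrw : (fun N : ℕ => Real.exp (-(γ + N) * s))
              = fun N : ℕ => Real.exp (-γ * s) * (Real.exp (-s)) ^ N := by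
            funext N
            rw [show -(γ + (N:ℝ)) * s = -γ * s + (N:ℝ) * (-s) by ring, Real.exp_add,
              Real.exp_nat_mul]
          rw [hrw]
          have hlt : Real.exp (-s) < 1 := by
            rw [← Real.exp_zero]
            exact Real.exp_lt_exp.2 (by linarith)
          have := (tendsto_pow_atTop_nhds_zero_of_lt_one (Real.exp_pos _).le hlt).const_mul
            (Real.exp (-γ * s))
          simpa using this
        have := hten.mul_const ‖μ.dens s p k‖
        simpa using this
    simpa using hmain
  set K : Fin n → Fin n → ℝ :=
    fun p j' => ∫ t in Ici (0:ℝ), Real.exp (-γ * t) * ‖μ.dens t p j'‖ ∂μ.base with hK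
  set εf : ℕ → ℝ := fun N => ∑ i' : Fin n, ∑ p, ∑ k, ‖B i' p‖ *
      ∫ s in Ioi (0:ℝ), Real.exp (-(γ + N) * s) * ‖μ.dens s p k‖ ∂μ.base with hεf
  have hεten : Tendsto εf atTop (𝓝 0) := by
    have h := tendsto_finset_sum (Finset.univ : Finset (Fin n)) (fun i' _ =>
      tendsto_finset_sum (Finset.univ : Finset (Fin n)) (fun p _ =>
        tendsto_finset_sum (Finset.univ : Finset (Fin n)) (fun k _ =>
          ((hm_tendsto p k).const_mul (‖B i' p‖)))))
    simpa [hεf] using h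
  obtain ⟨N, hN⟩ : ∃ N, εf N ≤ 1/2 :=
    (hεten.eventually (eventually_le_nhds (by norm_num : (0:ℝ) < 1/2))).exists
  refine ⟨γ + N, le_add_of_nonneg_right (Nat.cast_nonneg N), ?_⟩
  set α : ℝ := γ + (N:ℝ) with hαdef
  have hα : γ ≤ α := le_add_of_nonneg_right (Nat.cast_nonneg N)
  have hα0 : 0 ≤ α := le_trans hγ.le hα
  set m : Fin n → Fin n → ℝ :=
    fun p k => ∫ s in Ioi (0:ℝ), Real.exp (-α * s) * ‖μ.dens s p k‖ ∂μ.base with hmdef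
  have hm_nonneg : ∀ p k, 0 ≤ m p k := fun p k =>
    setIntegral_nonneg measurableSet_Ioi
      (fun s _ => mul_nonneg (Real.exp_pos _).le (norm_nonneg _))
  have hεm : εf N = ∑ i' : Fin n, ∑ p, ∑ k, ‖B i' p‖ * m p k := by
    rw [hεf, hmdef, hαdef]
  set C : Fin n → ℝ := fun j' => ∑ i' : Fin n, ∑ p, ‖B i' p‖ * K p j' with hC
  have hW : ∀ T : ℝ, 0 ≤ T → ∀ j' i' : Fin n,
      (∫ t in Icc (0:ℝ) T, Real.exp (-α * t) * ‖ρ.dens t i' j'‖ ∂ρ.base) ≤ 2 * C j' := by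
    intro T hT j' i'
    set v : Fin n → ℝ :=
      fun k => ∫ t in Icc (0:ℝ) T, Real.exp (-α * t) * ‖ρ.dens t k j'‖ ∂ρ.base with hvdef
    have hv_nonneg : ∀ k, 0 ≤ v k := fun k =>
      setIntegral_nonneg measurableSet_Icc
        (fun t _ => mul_nonneg (Real.exp_pos _).le (norm_nonneg _))
    set W : ℝ := ∑ k, v k with hWdef
    have hvW : ∀ k, v k ≤ W := fun k =>
      Finset.single_le_sum (fun k _ => hv_nonneg k) (Finset.mem_univ k)
    have hW_nonneg : 0 ≤ W := Finset.sum_nonneg fun k _ => hv_nonneg k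
    have hest : ∀ i'' : Fin n, v i'' ≤ ∑ p, ‖B i'' p‖ * (K p j' + ∑ k, m p k * v k) :=
      fun i'' => LocalMatrixMeasure.key_estimate μ ρ hρ hdet hγ hα hμγ' hT i'' j'
    have hsum : W ≤ C j' + εf N * W := by
      have h1 : W ≤ ∑ i'' : Fin n, ∑ p, ‖B i'' p‖ * (K p j' + ∑ k, m p k * v k) :=
        Finset.sum_le_sum fun i'' _ => hest i''
      have h2 : ∑ i'' : Fin n, ∑ p, ‖B i'' p‖ * (K p j' + ∑ k, m p k * v k)
          = C j' + ∑ i'' : Fin n, ∑ p, ∑ k, ‖B i'' p‖ * (m p k * v k) := by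
        rw [hC, ← Finset.sum_add_distrib]
        refine Finset.sum_congr rfl fun i'' _ => ?_
        rw [← Finset.sum_add_distrib]
        refine Finset.sum_congr rfl fun p _ => ?_
        rw [mul_add, Finset.mul_sum]
      have h3 : ∑ i'' : Fin n, ∑ p, ∑ k, ‖B i'' p‖ * (m p k * v k) ≤ εf N * W := by
        rw [hεm, Finset.sum_mul]
        refine Finset.sum_le_sum fun i'' _ => ?_
        rw [Finset.sum_mul]
        refine Finset.sum_le_sum fun p _ => ?_
        rw [Finset.sum_mul]
        refine Finset.sum_le_sum fun k _ => ?_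
        rw [mul_assoc]
        exact mul_le_mul_of_nonneg_left
          (mul_le_mul_of_nonneg_left (hvW k) (hm_nonneg p k)) (norm_nonneg _)
      linarith [h2 ▸ h1]
    have hhalf : εf N * W ≤ (1/2) * W := mul_le_mul_of_nonneg_right hN hW_nonneg
    calc v i' ≤ W := hvW i'
      _ ≤ 2 * C j' := by linarith
  -- conclusion: integrability of the weighted ρ-density
  intro i j
  have hmint : Measurable (fun t => Real.exp (-α * t) * ‖ρ.dens t i j‖) :=
    (Real.measurable_exp.comp (measurable_id.const_mul (-α))).mul (ρ.meas i j).norm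
  have hvint : ∀ Nn : ℕ, IntegrableOn (fun t => Real.exp (-α * t) * ‖ρ.dens t i j‖)
      (Icc (0:ℝ) Nn) ρ.base := by
    intro Nn
    refine Integrable.mono' (ρ.locInt Nn i j).norm hmint.aestronglyMeasurable ?_
    filter_upwards [ae_restrict_mem measurableSet_Icc] with t ht
    rw [Real.norm_eq_abs, abs_of_nonneg (mul_nonneg (Real.exp_pos _).le (norm_nonneg _))]
    calc Real.exp (-α * t) * ‖ρ.dens t i j‖ ≤ 1 * ‖ρ.dens t i j‖ := by
          refine mul_le_mul_of_nonneg_right ?_ (norm_nonneg _)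
          rw [← Real.exp_zero]
          exact Real.exp_le_exp.2 (by nlinarith [ht.1])
      _ = ‖ρ.dens t i j‖ := one_mul _
  have habs : (fun t => Real.exp (-α * t) * ‖ρ.dens t i j‖)
      = fun t => Real.exp (-α * t) * ‖ρ.dens t i j‖ := by
    funext t
    rfl
  rw [habs]
  refine ⟨hmint.aestronglyMeasurable, ?_⟩
  rw [hasFiniteIntegral_iff_ofReal
    (ae_of_all _ fun t => mul_nonneg (Real.exp_pos _).le (norm_nonneg _))]
  set g : ℝ → ENNReal := fun t => ENNReal.ofReal (Real.exp (-α * t) * ‖ρ.dens t i j‖)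
    with hg
  have hgmeas : Measurable g := hmint.ennreal_ofReal
  have hsplit : ∫⁻ t, g t ∂ρ.base = ∫⁻ t in Ici (0:ℝ), g t ∂ρ.base := by
    rw [← lintegral_add_compl g (measurableSet_Ici (a := (0:ℝ))) (μ := ρ.base)]
    have hz : ρ.base.restrict (Ici (0:ℝ))ᶜ = 0 := by
      rw [compl_Ici]
      exact Measure.restrict_eq_zero.mpr ρ.supp
    rw [hz, lintegral_zero_measure, add_zero]
  rw [hsplit]
  set φ : ℕ → ℝ → ENNReal := fun Nn t => (Icc (0:ℝ) Nn).indicator g t with hφ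
  have hφmono : Monotone φ := by
    intro a b hab t
    exact indicator_le_indicator_of_subset
      (Icc_subset_Icc_right (by exact_mod_cast hab)) (fun _ => zero_le) t
  have hφmeas : ∀ Nn, Measurable (φ Nn) := fun Nn => hgmeas.indicator measurableSet_Icc
  have hkey : ∫⁻ t in Ici (0:ℝ), g t ∂ρ.base
      = ⨆ Nn : ℕ, ∫⁻ t in Icc (0:ℝ) Nn, g t ∂ρ.base := by
    calc ∫⁻ t in Ici (0:ℝ), g t ∂ρ.base
        = ∫⁻ t in Ici (0:ℝ), ⨆ Nn : ℕ, φ Nn t ∂ρ.base := by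
          refine setLIntegral_congr_fun measurableSet_Ici (fun t ht => ?_)
          obtain ⟨Nn, hNn⟩ := exists_nat_ge t
          refine le_antisymm ?_ (iSup_le fun mm => indicator_le_self _ _ t)
          calc g t = φ Nn t := (indicator_of_mem (mem_Icc.mpr ⟨ht, hNn⟩) g).symm
            _ ≤ ⨆ mm, φ mm t := le_iSup (fun mm => φ mm t) Nn
      _ = ⨆ Nn : ℕ, ∫⁻ t in Ici (0:ℝ), φ Nn t ∂ρ.base :=
          lintegral_iSup (fun Nn => hφmeas Nn) hφmono
      _ = ⨆ Nn : ℕ, ∫⁻ t in Icc (0:ℝ) Nn, g t ∂ρ.base := by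
          refine iSup_congr fun Nn => ?_
          rw [hφ]
          rw [lintegral_indicator measurableSet_Icc,
            Measure.restrict_restrict measurableSet_Icc,
            inter_eq_self_of_subset_left Icc_subset_Ici_self]
  rw [hkey]
  refine lt_of_le_of_lt (iSup_le fun Nn => ?_) (ENNReal.ofReal_lt_top (r := 2 * C j))
  have heq := ofReal_integral_eq_lintegral_ofReal (hvint Nn)
    (ae_of_all _ fun t => mul_nonneg (Real.exp_pos _).le (norm_nonneg _))
  rw [← heq]
  exact ENNReal.ofReal_le_ofReal (hW Nn (Nat.cast_nonneg Nn) j i)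
end

section
/- Let (f_m) be a sequence of bounded Borel functions f_m : [-1,0] → ℝⁿ such that for every ℝⁿ-valued Borel vector measure μ on [-1,0] of bounded total variation, the sequence (∫_{[-1,0]} f_m · dμ) is Cauchy in ℝ. Then sup_m ‖f_m‖ < ∞, the pointwise limit f(x) = lim_m f_m(x) exists for every x ∈ [-1,0] and defines a bounded Borel function, and ∫ f_m · dμ → ∫ f · dμ for every such μ. In other words, the space of bounded Borel functions on [-1,0] equipped with the weak topology generated by the finite Borel vector measures is sequentially complete. -/
open MeasureTheory Filter Topology RealInnerProductSpace ENNReal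

/-- Banach–Steinhaus step: the Cauchy hypothesis for a fixed base measure yields a
uniform operator-norm bound. -/
lemma bw_key {n : ℕ}
    (f : ℕ → ℝ → EuclideanSpace ℝ (Fin n))
    (hfm : ∀ m, Measurable (f m))
    (hfb : ∀ m, ∃ C : ℝ, ∀ x ∈ Set.Icc (-1:ℝ) 0, ‖f m x‖ ≤ C)
    (base : Measure ℝ) [IsFiniteMeasure base]
    (hbase : base ((Set.Icc (-1:ℝ) 0)ᶜ) = 0)
    (hc : ∀ dens : ℝ → EuclideanSpace ℝ (Fin n), Measurable dens → Integrable dens base →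
      CauchySeq (fun m => ∫ x, ⟪f m x, dens x⟫ ∂base)) :
    ∃ C : ℝ, ∀ m (dens : ℝ → EuclideanSpace ℝ (Fin n)), Measurable dens →
      Integrable dens base →
      |∫ x, ⟪f m x, dens x⟫ ∂base| ≤ C * ∫ x, ‖dens x‖ ∂base := by
  classical
  have haeIcc : ∀ᵐ x ∂base, x ∈ Set.Icc (-1:ℝ) 0 := by
    rw [ae_iff]
    simpa [Set.compl_def] using hbase
  -- integrability of the pairing
  have hint : ∀ m (u : ℝ → EuclideanSpace ℝ (Fin n)), AEStronglyMeasurable u base →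
      Integrable (fun x => ‖u x‖) base → Integrable (fun x => ⟪f m x, u x⟫) base := by
    intro m u hum hui
    obtain ⟨C, hC⟩ := hfb m
    refine Integrable.mono' (hui.const_mul C) ((hfm m).aestronglyMeasurable.inner hum) ?_
    filter_upwards [haeIcc] with x hx
    calc ‖⟪f m x, u x⟫‖ ≤ ‖f m x‖ * ‖u x‖ := norm_inner_le_norm _ _
      _ ≤ C * ‖u x‖ := mul_le_mul_of_nonneg_right (hC x hx) (norm_nonneg _)
  -- construct the continuous linear maps
  have hSex : ∀ m, ∃ S : (Lp (EuclideanSpace ℝ (Fin n)) 1 base) →L[ℝ] ℝ,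
      ∀ u, S u = ∫ x, ⟪f m x, u x⟫ ∂base := by
    intro m
    obtain ⟨C, hC⟩ := hfb m
    have hC' : ∀ x ∈ Set.Icc (-1:ℝ) 0, ‖f m x‖ ≤ max C 0 :=
      fun x hx => le_max_of_le_left (hC x hx)
    have hintu : ∀ u : Lp (EuclideanSpace ℝ (Fin n)) 1 base,
        Integrable (fun x => ⟪f m x, u x⟫) base := fun u =>
      hint m u (Lp.aestronglyMeasurable u) (L1.integrable_coeFn u).norm
    refine ⟨LinearMap.mkContinuous
      { toFun := fun u => ∫ x, ⟪f m x, u x⟫ ∂base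
        map_add' := ?_
        map_smul' := ?_ } (max C 0) ?_, fun u => rfl⟩
    · intro u v
      have h1 : ∫ x, ⟪f m x, (↑(u + v) : ℝ → EuclideanSpace ℝ (Fin n)) x⟫ ∂base
          = ∫ x, (⟪f m x, u x⟫ + ⟪f m x, v x⟫) ∂base := by
        refine integral_congr_ae ?_
        filter_upwards [Lp.coeFn_add u v] with x hx
        rw [hx]
        simp [inner_add_right]
      rw [h1, integral_add (hintu u) (hintu v)]
    · intro c u
      have h1 : ∫ x, ⟪f m x, (↑(c • u) : ℝ → EuclideanSpace ℝ (Fin n)) x⟫ ∂base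
          = ∫ x, c * ⟪f m x, u x⟫ ∂base := by
        refine integral_congr_ae ?_
        filter_upwards [Lp.coeFn_smul c u] with x hx
        rw [hx]
        simp [inner_smul_right]
      rw [h1, integral_const_mul]
      rfl
    · intro u
      have hb : ∀ᵐ x ∂base, ‖⟪f m x, u x⟫‖ ≤ max C 0 * ‖u x‖ := by
        filter_upwards [haeIcc] with x hx
        calc ‖⟪f m x, u x⟫‖ ≤ ‖f m x‖ * ‖u x‖ := norm_inner_le_norm _ _
          _ ≤ max C 0 * ‖u x‖ := mul_le_mul_of_nonneg_right (hC' x hx) (norm_nonneg _)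
      calc ‖∫ x, ⟪f m x, u x⟫ ∂base‖ ≤ ∫ x, ‖⟪f m x, u x⟫‖ ∂base :=
            norm_integral_le_integral_norm _
        _ ≤ ∫ x, max C 0 * ‖u x‖ ∂base :=
            integral_mono_ae (hintu u).norm ((L1.integrable_coeFn u).norm.const_mul _) hb
        _ = max C 0 * ∫ x, ‖u x‖ ∂base := integral_const_mul _ _
        _ = max C 0 * ‖u‖ := by rw [L1.norm_eq_integral_norm]
  choose S hS using hSex
  -- pointwise boundedness
  have hpt : ∀ u : Lp (EuclideanSpace ℝ (Fin n)) 1 base, ∃ C, ∀ m, ‖S m u‖ ≤ C := by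
    intro u
    have hu := (Lp.aestronglyMeasurable u).aemeasurable
    set d := hu.mk _ with hd
    have hdm : Measurable d := hu.measurable_mk
    have hde : (↑u : ℝ → EuclideanSpace ℝ (Fin n)) =ᵐ[base] d := hu.ae_eq_mk
    have hdint : Integrable d base := (L1.integrable_coeFn u).congr hde
    have heq : ∀ m, S m u = ∫ x, ⟪f m x, d x⟫ ∂base := by
      intro m
      rw [hS m u]
      refine integral_congr_ae ?_
      filter_upwards [hde] with x hx
      rw [hx]
    obtain ⟨R, hR0, hR⟩ := cauchySeq_bdd (hc d hdm hdint)
    refine ⟨R + |∫ x, ⟪f 0 x, d x⟫ ∂base|, fun m => ?_⟩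
    rw [Real.norm_eq_abs, heq m]
    have h3 := hR m 0
    rw [Real.dist_eq] at h3
    have h4 := abs_sub_abs_le_abs_sub (∫ x, ⟪f m x, d x⟫ ∂base) (∫ x, ⟪f 0 x, d x⟫ ∂base)
    linarith
  obtain ⟨C', hC'⟩ := banach_steinhaus hpt
  refine ⟨C', fun m dens hdm hdi => ?_⟩
  set u := hdi.toL1 dens with hu
  have h1 : S m u = ∫ x, ⟪f m x, dens x⟫ ∂base := by
    rw [hS m u]
    refine integral_congr_ae ?_
    filter_upwards [hdi.coeFn_toL1] with x hx
    rw [hx]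
  have h2 : ‖u‖ = ∫ x, ‖dens x‖ ∂base := by
    rw [L1.norm_eq_integral_norm]
    refine integral_congr_ae ?_
    filter_upwards [hdi.coeFn_toL1] with x hx
    rw [hx]
  calc |∫ x, ⟪f m x, dens x⟫ ∂base| = ‖S m u‖ := by rw [h1, Real.norm_eq_abs]
    _ ≤ ‖S m‖ * ‖u‖ := (S m).le_opNorm u
    _ ≤ C' * ∫ x, ‖dens x‖ ∂base := by
        rw [← h2]
        exact mul_le_mul_of_nonneg_right (hC' m) (norm_nonneg _)

/-- Part II of the proof of Theorem B.1 of Diekmann–Verduyn Lunel: the space of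
bounded Borel functions on `[-1,0]` with the weak topology generated by the finite
Borel vector measures is sequentially complete.  If `(f_m)` is a sequence of bounded
Borel functions such that `(∫ f_m · dμ)` is Cauchy for every `ℝⁿ`-valued Borel vector
measure `μ` of bounded total variation (represented by a finite base measure with an
integrable density), then `(f_m)` is uniformly bounded, converges pointwise on
`[-1,0]` to a bounded Borel function `g`, and `∫ f_m · dμ → ∫ g · dμ` for every such
`μ`. -/
theorem b_weak_sequentially_complete {n : ℕ}
    (f : ℕ → ℝ → EuclideanSpace ℝ (Fin n))
    (hfm : ∀ m, Measurable (f m))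
    (hfb : ∀ m, ∃ C : ℝ, ∀ x ∈ Set.Icc (-1:ℝ) 0, ‖f m x‖ ≤ C)
    (hcauchy : ∀ (base : Measure ℝ), IsFiniteMeasure base →
      base ((Set.Icc (-1:ℝ) 0)ᶜ) = 0 →
      ∀ dens : ℝ → EuclideanSpace ℝ (Fin n), Measurable dens → Integrable dens base →
      CauchySeq (fun m => ∫ x, ⟪f m x, dens x⟫ ∂base)) :
    (∃ C : ℝ, ∀ m, ∀ x ∈ Set.Icc (-1:ℝ) 0, ‖f m x‖ ≤ C)
    ∧ ∃ g : ℝ → EuclideanSpace ℝ (Fin n), Measurable g ∧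
        (∃ C : ℝ, ∀ x ∈ Set.Icc (-1:ℝ) 0, ‖g x‖ ≤ C) ∧
        (∀ x ∈ Set.Icc (-1:ℝ) 0, Tendsto (fun m => f m x) atTop (𝓝 (g x))) ∧
        (∀ (base : Measure ℝ), IsFiniteMeasure base →
          base ((Set.Icc (-1:ℝ) 0)ᶜ) = 0 →
          ∀ dens : ℝ → EuclideanSpace ℝ (Fin n), Measurable dens → Integrable dens base →
          Tendsto (fun m => ∫ x, ⟪f m x, dens x⟫ ∂base) atTop
            (𝓝 (∫ x, ⟪g x, dens x⟫ ∂base))) := by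
  classical
  -- Step 1: pointwise Cauchy via Dirac measures
  have hdirac : ∀ x ∈ Set.Icc (-1:ℝ) 0, ∀ v : EuclideanSpace ℝ (Fin n),
      CauchySeq fun m => ⟪f m x, v⟫ := by
    intro x hx v
    have hb : (Measure.dirac x) ((Set.Icc (-1:ℝ) 0)ᶜ) = 0 := by
      rw [Measure.dirac_apply' _ measurableSet_Icc.compl]
      simp [hx]
    have := hcauchy (Measure.dirac x) inferInstance hb (fun _ => v) measurable_const
      (integrable_const v)
    simpa using this
  have hpt : ∀ x ∈ Set.Icc (-1:ℝ) 0, ∃ L : EuclideanSpace ℝ (Fin n),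
      Tendsto (fun m => f m x) atTop (𝓝 L) := by
    intro x hx
    have hcoord : ∀ i : Fin n, ∃ l : ℝ, Tendsto (fun m => f m x i) atTop (𝓝 l) := by
      intro i
      have h1 := hdirac x hx (EuclideanSpace.single i (1:ℝ))
      have h2 : CauchySeq fun m => f m x i := by
        have : (fun m => ⟪f m x, EuclideanSpace.single i (1:ℝ)⟫) = fun m => f m x i := by
          funext m
          simp [EuclideanSpace.inner_single_right]
        rwa [this] at h1
      exact cauchySeq_tendsto_of_complete h2
    choose l hl using hcoord
    refine ⟨(EuclideanSpace.equiv (Fin n) ℝ).symm l, ?_⟩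
    have h3 : Tendsto (fun m => (EuclideanSpace.equiv (Fin n) ℝ) (f m x)) atTop (𝓝 l) := by
      rw [tendsto_pi_nhds]; exact hl
    have h4 := ((EuclideanSpace.equiv (Fin n) ℝ).symm.continuous.tendsto l).comp h3
    simpa [Function.comp_def] using h4
  -- Step 2: uniform boundedness
  have hub : ∃ C : ℝ, ∀ m, ∀ x ∈ Set.Icc (-1:ℝ) 0, ‖f m x‖ ≤ C := by
    by_contra hCon
    push_neg at hCon
    have hsel : ∀ k : ℕ, ∃ p : ℕ × ℝ, p.2 ∈ Set.Icc (-1:ℝ) 0 ∧ (k:ℝ) < ‖f p.1 p.2‖ := by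
      intro k
      obtain ⟨m, x, hx, h⟩ := hCon k
      exact ⟨(m, x), hx, h⟩
    choose p hpI hpN using hsel
    set x : ℕ → ℝ := fun k => (p k).2 with hxdef
    have hxm : Measurable x := Measurable.of_discrete
    set μN : Measure ℕ := Measure.sum (fun k : ℕ => ((2:ℝ≥0∞)⁻¹)^(k+1) • Measure.dirac k)
      with hμN
    have hμNfin : μN Set.univ ≤ 1 := by
      rw [hμN, Measure.sum_apply _ MeasurableSet.univ]
      have : ∀ k : ℕ, (((2:ℝ≥0∞)⁻¹)^(k+1) • Measure.dirac k) Set.univ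
          = ((2:ℝ≥0∞)⁻¹)^(k+1) := by
        intro k; simp
      rw [tsum_congr this, ENNReal.tsum_geometric_add_one, ENNReal.one_sub_inv_two,
        inv_inv]
      exact le_of_eq (ENNReal.inv_mul_cancel (by norm_num) (by norm_num))
    set base : Measure ℝ := μN.map x with hbdef
    haveI hbfin : IsFiniteMeasure base := by
      constructor
      rw [hbdef, Measure.map_apply hxm MeasurableSet.univ, Set.preimage_univ]
      exact lt_of_le_of_lt hμNfin (by norm_num)
    have hb0 : base ((Set.Icc (-1:ℝ) 0)ᶜ) = 0 := by
      rw [hbdef, Measure.map_apply hxm measurableSet_Icc.compl]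
      have : x ⁻¹' (Set.Icc (-1:ℝ) 0)ᶜ = ∅ := by
        ext k
        simp [hpI k]
        exact hpI k
      rw [this, measure_empty]
    obtain ⟨C, hC⟩ := bw_key f hfm hfb base hb0
      (fun dens hdm hdi => hcauchy base hbfin hb0 dens hdm hdi)
    have hjC : ∀ j : ℕ, (j : ℝ) < C := by
      intro j
      set v : EuclideanSpace ℝ (Fin n) := f (p j).1 (x j) with hv
      have hvpos : 0 < ‖v‖ := lt_of_le_of_lt (Nat.cast_nonneg j) (hpN j)
      -- positivity of base {x j}
      have hb1 : ((2:ℝ≥0∞)⁻¹)^(j+1) ≤ base {x j} := by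
        rw [hbdef, Measure.map_apply hxm (measurableSet_singleton _)]
        refine le_trans ?_ (measure_mono (Set.singleton_subset_iff.2 (Set.mem_preimage.2 (Set.mem_singleton _))))
        rw [hμN, Measure.sum_apply _ (measurableSet_singleton j)]
        refine le_trans ?_ (ENNReal.le_tsum j)
        simp
      have htne0 : base {x j} ≠ 0 := by
        intro h0
        rw [h0] at hb1
        simp at hb1
      have htpos : 0 < (base {x j}).toReal :=
        ENNReal.toReal_pos htne0 (measure_ne_top base _)
      set t : ℝ := (base {x j}).toReal with ht
      set dens : ℝ → EuclideanSpace ℝ (Fin n) := Set.indicator {x j} (fun _ => v) with hdens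
      have hdm : Measurable dens := measurable_const.indicator (measurableSet_singleton _)
      have hdi : Integrable dens base :=
        (integrable_const v).indicator (measurableSet_singleton _)
      have hkey := hC (p j).1 dens hdm hdi
      have hL : ∫ x', ⟪f (p j).1 x', dens x'⟫ ∂base = t * (‖v‖^2) := by
        have h1 : (fun x' => ⟪f (p j).1 x', dens x'⟫)
            = Set.indicator {x j} (fun x' => ⟪f (p j).1 x', v⟫) := by
          funext x'
          rw [hdens]
          simp only [Set.indicator_apply]
          split <;> simp
        rw [h1, integral_indicator (measurableSet_singleton _)]
        rw [setIntegral_congr_fun (measurableSet_singleton _)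
          (g := fun _ => (‖v‖^2 : ℝ)) ?_]
        · rw [setIntegral_const, smul_eq_mul]
          rfl
        · intro y hy
          rw [Set.mem_singleton_iff] at hy
          subst hy
          exact real_inner_self_eq_norm_sq v
      have hR : ∫ x', ‖dens x'‖ ∂base = t * ‖v‖ := by
        have h1 : (fun x' => ‖dens x'‖) = Set.indicator {x j} (fun _ => ‖v‖) := by
          funext x'
          rw [hdens, norm_indicator_eq_indicator_norm]
        rw [h1, integral_indicator (measurableSet_singleton _), setIntegral_const,
          smul_eq_mul]
        rfl
      rw [hL, hR, abs_of_nonneg (by positivity)] at hkey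
      have hvC : ‖v‖ ≤ C := by
        have h2 : t * ‖v‖ * ‖v‖ ≤ C * (t * ‖v‖) := by rw [mul_assoc, ← pow_two]; exact hkey
        have h3 : 0 < t * ‖v‖ := mul_pos htpos hvpos
        nlinarith
      exact lt_of_lt_of_le (hpN j) hvC
    obtain ⟨j, hj⟩ := exists_nat_ge C
    exact absurd (hjC j) (not_lt.2 hj)
  obtain ⟨C, hC⟩ := hub
  refine ⟨⟨C, hC⟩, ?_⟩
  choose L hL using hpt
  set g : ℝ → EuclideanSpace ℝ (Fin n) :=
    fun x => if h : x ∈ Set.Icc (-1:ℝ) 0 then L x h else 0 with hg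
  have htends : ∀ x ∈ Set.Icc (-1:ℝ) 0, Tendsto (fun m => f m x) atTop (𝓝 (g x)) := by
    intro x hx
    rw [hg]
    simp only [dif_pos hx]
    exact hL x hx
  have hgm : Measurable g := by
    refine measurable_of_tendsto_metrizable
      (f := fun m => (Set.Icc (-1:ℝ) 0).indicator (f m))
      (fun m => (hfm m).indicator measurableSet_Icc) ?_
    rw [tendsto_pi_nhds]
    intro x
    by_cases hx : x ∈ Set.Icc (-1:ℝ) 0
    · have h1 : (fun m => (Set.Icc (-1:ℝ) 0).indicator (f m) x) = fun m => f m x := by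
        funext m; rw [Set.indicator_of_mem hx]
      rw [h1]
      exact htends x hx
    · have h1 : (fun m => (Set.Icc (-1:ℝ) 0).indicator (f m) x)
          = fun _ => (0 : EuclideanSpace ℝ (Fin n)) := by
        funext m; rw [Set.indicator_of_notMem hx]
      rw [h1, hg]
      simp only [dif_neg hx]
      exact tendsto_const_nhds
  have hgb : ∀ x ∈ Set.Icc (-1:ℝ) 0, ‖g x‖ ≤ C := by
    intro x hx
    exact le_of_tendsto (htends x hx).norm (Eventually.of_forall fun m => hC m x hx)
  refine ⟨g, hgm, ⟨C, hgb⟩, htends, ?_⟩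
  intro base hbfin hb0 dens hdm hdi
  haveI := hbfin
  have haeIcc : ∀ᵐ x ∂base, x ∈ Set.Icc (-1:ℝ) 0 := by
    rw [ae_iff]
    simpa [Set.compl_def] using hb0
  refine tendsto_integral_of_dominated_convergence (fun x => C * ‖dens x‖)
    (fun m => (hfm m).aestronglyMeasurable.inner hdm.aestronglyMeasurable)
    (hdi.norm.const_mul C) (fun m => ?_) ?_
  · filter_upwards [haeIcc] with x hx
    calc ‖⟪f m x, dens x⟫‖ ≤ ‖f m x‖ * ‖dens x‖ := norm_inner_le_norm _ _
      _ ≤ C * ‖dens x‖ := mul_le_mul_of_nonneg_right (hC m x hx) (norm_nonneg _)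
  · filter_upwards [haeIcc] with x hx
    exact (htends x hx).inner tendsto_const_nhds
end
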